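/- arXiv:1903.07555 — 6 statements merged into one kernel-verified Lean document; each statement's English description precedes it below -/
import Mathlib

section
/- Let H be a Hilbert space, K a finite-dimensional subspace of H, and (R_N) a sequence of orthogonal projections in H converging pointwise to the identity (R_N z → z for all z ∈ H). Let S_N be the orthogonal projection onto R_N(K) and S the orthogonal projection onto K. Then S_N z → S z for every z ∈ H. -/
set_option maxHeartbeats 800000


open Filter Topology RealInnerProductSpace

lemma stmt8_proj_min {H : Type*} [NormedAddCommGroup H] [InnerProductSpace ℝ H]
    (M : Submodule ℝ H) [M.HasOrthogonalProjection] (z w : H) (hw : w ∈ M) :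
    ‖z - Submodule.orthogonalProjectionOnto M z‖ ≤ ‖z - w‖ := by
  have h : z - w = (z - Submodule.orthogonalProjectionOnto M z) + ((Submodule.orthogonalProjectionOnto M z : H) - w) := by abel
  have hin : ⟪z - (Submodule.orthogonalProjectionOnto M z : H), (Submodule.orthogonalProjectionOnto M z : H) - w⟫ = 0 :=
    Submodule.starProjection_inner_eq_zero z _ (Submodule.sub_mem M (Submodule.orthogonalProjectionOnto M z).2 hw)
  have hsq : ‖z - w‖^2 = ‖z - (Submodule.orthogonalProjectionOnto M z : H)‖^2 + ‖(Submodule.orthogonalProjectionOnto M z : H) - w‖^2 := by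
    rw [h, norm_add_sq_real, hin]; ring
  nlinarith [norm_nonneg (z - w), norm_nonneg (z - (Submodule.orthogonalProjectionOnto M z : H)),
    norm_nonneg ((Submodule.orthogonalProjectionOnto M z : H) - w)]

lemma stmt8_approx {H : Type*} [NormedAddCommGroup H] [InnerProductSpace ℝ H]
    (K : Submodule ℝ H) [FiniteDimensional ℝ K] (T : H →L[ℝ] H) (v : K) :
    ‖T v - (v : H)‖ ≤
      (∑ i, ‖T (stdOrthonormalBasis ℝ K i) - (stdOrthonormalBasis ℝ K i : H)‖) * ‖(v : H)‖ := by
  set b := stdOrthonormalBasis ℝ K with hb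
  have hv : (v : H) = ∑ i, b.repr v i • (b i : H) := by
    conv_lhs => rw [← b.sum_repr v]
    push_cast
    rfl
  have hsplit : T v - (v : H) = ∑ i, b.repr v i • (T (b i) - (b i : H)) := by
    rw [hv, map_sum]
    simp [smul_sub, Finset.sum_sub_distrib]
  rw [hsplit]
  calc ‖∑ i, b.repr v i • (T (b i) - (b i : H))‖
      ≤ ∑ i, ‖b.repr v i • (T (b i) - (b i : H))‖ := norm_sum_le _ _
    _ ≤ ∑ i, ‖T (b i) - (b i : H)‖ * ‖(v : H)‖ := by
        apply Finset.sum_le_sum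
        intro i _
        rw [norm_smul]
        have hrepr : b.repr v i = ⟪(b i : H), (v : H)⟫ := by
          rw [b.repr_apply_apply v i]
          rfl
        have : ‖b.repr v i‖ ≤ ‖(v : H)‖ := by
          rw [hrepr, Real.norm_eq_abs]
          calc |⟪(b i : H), (v : H)⟫| ≤ ‖(b i : H)‖ * ‖(v : H)‖ := abs_real_inner_le_norm _ _
            _ = ‖(v : H)‖ := by
                have : ‖b i‖ = 1 := b.orthonormal.1 i
                rw [show ‖(b i : H)‖ = ‖b i‖ from rfl, this, one_mul]
        calc ‖b.repr v i‖ * ‖T (b i) - (b i : H)‖ ≤ ‖(v : H)‖ * ‖T (b i) - (b i : H)‖ :=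
              mul_le_mul_of_nonneg_right this (norm_nonneg _)
          _ = ‖T (b i) - (b i : H)‖ * ‖(v : H)‖ := mul_comm _ _
    _ = (∑ i, ‖T (b i) - (b i : H)‖) * ‖(v : H)‖ := by rw [Finset.sum_mul]

/-- If `K` is a finite-dimensional subspace of a Hilbert space and `(R_N)` are orthogonal
projections converging pointwise to the identity, then the orthogonal projections onto
`R_N(K)` converge pointwise to the orthogonal projection onto `K`. -/
theorem stmt8 {H : Type*} [NormedAddCommGroup H] [InnerProductSpace ℝ H] [CompleteSpace H]
    (K : Submodule ℝ H) [FiniteDimensional ℝ K]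
    (R : ℕ → H →L[ℝ] H)
    (hsa : ∀ N, IsSelfAdjoint (R N)) (hidem : ∀ N, (R N) ∘L (R N) = R N)
    (hlim : ∀ z : H, Tendsto (fun N => R N z) atTop (𝓝 z))
    [∀ N, Submodule.HasOrthogonalProjection (Submodule.map (R N : H →ₗ[ℝ] H) K)] :
    ∀ z : H, Tendsto (fun N => (Submodule.orthogonalProjectionOnto (Submodule.map (R N : H →ₗ[ℝ] H) K) z : H))
      atTop (𝓝 (Submodule.orthogonalProjectionOnto K z : H)) := by
  intro z
  set b := stdOrthonormalBasis ℝ K with hb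
  set δ : ℕ → ℝ := fun N => ∑ i, ‖R N (b i) - (b i : H)‖ with hδ
  -- δ N → 0
  have hδ0 : ∀ N, 0 ≤ δ N := fun N => Finset.sum_nonneg fun i _ => norm_nonneg _
  have hδlim : Tendsto δ atTop (𝓝 0) := by
    have : Tendsto δ atTop (𝓝 (∑ i : Fin (Module.finrank ℝ K), (0:ℝ))) := by
      apply tendsto_finset_sum
      intro i _
      have := (hlim (b i : H)).sub_const (b i : H)
      simpa using this.norm
    simpa using this
  have hA : ∀ N, ∀ v : K, ‖R N v - (v : H)‖ ≤ δ N * ‖(v : H)‖ := fun N v =>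
    stmt8_approx K (R N) v
  set P : H := (Submodule.orthogonalProjectionOnto K z : H) with hP
  set w : ℕ → H := fun N => (Submodule.orthogonalProjectionOnto (Submodule.map (R N : H →ₗ[ℝ] H) K) z : H) with hw
  set d : ℝ := ‖z - P‖ with hd
  -- choose preimages of w N in K
  have hwmem : ∀ N, w N ∈ Submodule.map (R N : H →ₗ[ℝ] H) K :=
    fun N => (Submodule.orthogonalProjectionOnto (Submodule.map (R N : H →ₗ[ℝ] H) K) z).2
  choose v hvK hvR using fun N => (hwmem N)
  -- ‖w N‖ ≤ ‖z‖
  have hwle : ∀ N, ‖w N‖ ≤ ‖z‖ := by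
    intro N
    calc ‖w N‖ ≤ 1 * ‖z‖ := by
          simpa [hw] using (Submodule.orthogonalProjectionOnto (Submodule.map (R N : H →ₗ[ℝ] H) K)).le_of_opNorm_le
            (Submodule.orthogonalProjectionOnto_norm_le _) z
      _ = ‖z‖ := one_mul _
  -- minimality bound: ‖z - w N‖ ≤ ‖z - R N P‖
  have hmin : ∀ N, ‖z - w N‖ ≤ ‖z - R N P‖ := by
    intro N
    apply stmt8_proj_min
    exact ⟨P, (Submodule.orthogonalProjectionOnto K z).2, rfl⟩
  set bnd : ℕ → ℝ := fun N => ‖z - R N P‖ with hbnd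
  have hbndlim : Tendsto bnd atTop (𝓝 d) := by
    have := (tendsto_const_nhds (x := z) (f := atTop)).sub (hlim P)
    simpa [hd] using this.norm
  -- main estimate, valid when δ N ≤ 1/2
  have key : ∀ᶠ N in atTop, ‖w N - P‖ ≤
      2 * δ N * ‖z‖ + Real.sqrt (2 * (bnd N + 2 * δ N * ‖z‖)^2 - 2 * d^2) := by
    filter_upwards [hδlim.eventually (eventually_le_nhds (by norm_num : (0:ℝ) < 1/2))] with N hN
    -- hN : δ N ≤ 1/2
    set u : H := (v N : H) with hu
    have hRu : R N u = w N := hvR N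
    have hA' : ‖R N u - u‖ ≤ δ N * ‖u‖ := hA N ⟨v N, hvK N⟩
    -- ‖u‖ ≤ 2‖w N‖ ≤ 2‖z‖
    have hub : ‖u‖ ≤ 2 * ‖z‖ := by
      have h1 : ‖u‖ ≤ ‖w N‖ + δ N * ‖u‖ := by
        calc ‖u‖ ≤ ‖R N u‖ + ‖R N u - u‖ := by
              have := norm_sub_le (R N u) (R N u - u)
              simpa using this
          _ ≤ ‖R N u‖ + δ N * ‖u‖ := by gcongr
          _ = ‖w N‖ + δ N * ‖u‖ := by rw [hRu]
      nlinarith [hwle N, norm_nonneg u, norm_nonneg z, hδ0 N]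
    have hwu : ‖w N - u‖ ≤ 2 * δ N * ‖z‖ := by
      calc ‖w N - u‖ = ‖R N u - u‖ := by rw [hRu]
        _ ≤ δ N * ‖u‖ := hA'
        _ ≤ δ N * (2 * ‖z‖) := mul_le_mul_of_nonneg_left hub (hδ0 N)
        _ = 2 * δ N * ‖z‖ := by ring
    have hzu : ‖z - u‖ ≤ bnd N + 2 * δ N * ‖z‖ := by
      calc ‖z - u‖ ≤ ‖z - w N‖ + ‖w N - u‖ := by
            have := norm_add_le (z - w N) (w N - u)
            simpa using this
        _ ≤ bnd N + 2 * δ N * ‖z‖ := add_le_add (hmin N) hwu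
    -- parallelogram: ‖u - P‖² ≤ 2‖z-u‖² - 2d²
    have hmid : d ≤ ‖z - (2:ℝ)⁻¹ • (u + P)‖ := by
      apply stmt8_proj_min
      exact Submodule.smul_mem K _ (Submodule.add_mem K (hvK N) (Submodule.orthogonalProjectionOnto K z).2)
    have hpar : ‖u - P‖^2 ≤ 2 * ‖z - u‖^2 - 2 * d^2 := by
      have hlaw := parallelogram_law_with_norm ℝ (z - u) (z - P)
      have he1 : (z - u) + (z - P) = (2:ℝ) • (z - (2:ℝ)⁻¹ • (u + P)) := by
        rw [smul_sub, smul_smul]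
        norm_num
        rw [two_smul]
        abel
      have he2 : (z - u) - (z - P) = P - u := by abel
      have hn2 : ‖(2:ℝ)‖ = 2 := by norm_num
      have hnPu : ‖P - u‖ = ‖u - P‖ := norm_sub_rev _ _
      rw [he1, he2, norm_smul, hn2, hnPu, ← hd] at hlaw
      have hd0 : 0 ≤ d := hd ▸ norm_nonneg _
      nlinarith [hlaw, hmid, hd0]
    have huP : ‖u - P‖ ≤ Real.sqrt (2 * (bnd N + 2 * δ N * ‖z‖)^2 - 2 * d^2) := by
      have hx : ‖u - P‖^2 ≤ 2 * (bnd N + 2 * δ N * ‖z‖)^2 - 2 * d^2 := by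
        nlinarith [hzu, norm_nonneg (z - u), hpar]
      calc ‖u - P‖ = Real.sqrt (‖u - P‖^2) := (Real.sqrt_sq (norm_nonneg _)).symm
        _ ≤ _ := Real.sqrt_le_sqrt hx
    calc ‖w N - P‖ ≤ ‖w N - u‖ + ‖u - P‖ := by
          have := norm_add_le (w N - u) (u - P)
          simpa using this
      _ ≤ 2 * δ N * ‖z‖ + Real.sqrt (2 * (bnd N + 2 * δ N * ‖z‖)^2 - 2 * d^2) :=
          add_le_add hwu huP
  -- the bounding sequence tends to 0
  have hglim : Tendsto (fun N => 2 * δ N * ‖z‖ + Real.sqrt (2 * (bnd N + 2 * δ N * ‖z‖)^2 - 2 * d^2))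
      atTop (𝓝 0) := by
    have h1 : Tendsto (fun N => 2 * δ N * ‖z‖) atTop (𝓝 0) := by
      have := hδlim.const_mul 2 |>.mul_const ‖z‖
      simpa using this
    have h2 : Tendsto (fun N => 2 * (bnd N + 2 * δ N * ‖z‖)^2 - 2 * d^2) atTop (𝓝 0) := by
      have : Tendsto (fun N => bnd N + 2 * δ N * ‖z‖) atTop (𝓝 d) := by
        simpa using hbndlim.add h1
      have := ((this.pow 2).const_mul 2).sub_const (2 * d^2)
      simpa [sub_self] using this
    have h3 : Tendsto (fun N => Real.sqrt (2 * (bnd N + 2 * δ N * ‖z‖)^2 - 2 * d^2)) atTop (𝓝 0) := by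
      have := (Real.continuous_sqrt.tendsto 0).comp h2
      simpa [Function.comp_def] using this
    simpa using h1.add h3
  -- squeeze
  rw [← tendsto_sub_nhds_zero_iff]
  apply squeeze_zero_norm' _ hglim
  filter_upwards [key] with N hN
  simpa using hN
end

section
/- Let H be a Hilbert space, (Z_N) an increasing sequence of finite-dimensional subspaces with dense union, and L₀ a closed subspace of H of finite codimension. Then for every z ∈ H, the orthogonal projections P_{L₀ ∩ Z_N} z converge to P_{L₀} z as N → ∞. In particular, ⋃_{N≥1}(L₀ ∩ Z_N) is dense in L₀. -/
open Filter Topology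
open scoped RealInnerProductSpace
open Submodule (orthogonalProjection HasOrthogonalProjection orthogonalProjection_eq_zero_iff
  orthogonalProjection_mem_subspace_eq_self)

section aux

variable {H : Type*} [NormedAddCommGroup H] [InnerProductSpace ℝ H] [CompleteSpace H]

private lemma proj_coe_norm_le (K : Submodule ℝ H) [HasOrthogonalProjection K] (v : H) :
    ‖(orthogonalProjection K v : H)‖ ≤ ‖v‖ := by
  calc ‖(orthogonalProjection K v : H)‖ = ‖orthogonalProjection K v‖ := rfl
    _ ≤ ‖orthogonalProjection K‖ * ‖v‖ := (orthogonalProjection K).le_opNorm v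
    _ ≤ 1 * ‖v‖ := by
        gcongr
        exact Submodule.orthogonalProjectionOnto_norm_le K
    _ = ‖v‖ := one_mul ‖v‖

private lemma proj_congr (M M' : Submodule ℝ H) [HasOrthogonalProjection M]
    [HasOrthogonalProjection M'] (h : M = M') (x : H) :
    (orthogonalProjection M x : H) = orthogonalProjection M' x := by subst h; rfl

end aux

/-- If `(Z_N)` is an increasing sequence of finite-dimensional subspaces of a Hilbert space
with dense union and `L₀` is a closed subspace of finite codimension, then
`P_{L₀ ∩ Z_N} z → P_{L₀} z` for every `z`; in particular `⋃ (L₀ ∩ Z_N)` is dense in `L₀`. -/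
theorem stmt9 {H : Type*} [NormedAddCommGroup H] [InnerProductSpace ℝ H] [CompleteSpace H]
    (Z : ℕ → Submodule ℝ H) (hmono : Monotone Z) [∀ N, FiniteDimensional ℝ (Z N)]
    (hdense : Dense (⋃ N, (Z N : Set H)))
    (L₀ : Submodule ℝ H) (hL₀ : IsClosed (L₀ : Set H)) [CompleteSpace L₀]
    [FiniteDimensional ℝ L₀ᗮ]
    [∀ N, FiniteDimensional ℝ (L₀ ⊓ Z N : Submodule ℝ H)] :
    (∀ z : H, Tendsto (fun N => (Submodule.orthogonalProjection (L₀ ⊓ Z N) z : H))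
        atTop (𝓝 (Submodule.orthogonalProjection L₀ z : H))) ∧
    (L₀ : Set H) ⊆ closure (⋃ N, ((L₀ ⊓ Z N : Submodule ℝ H) : Set H)) := by
  -- pointwise convergence of projections onto `Z N` to the identity
  have htop : ⊤ ≤ (⨆ N, Z N).topologicalClosure := by
    intro v _
    have : (↑((⨆ N, Z N).topologicalClosure) : Set H) = closure (⋃ N, (Z N : Set H)) := by
      rw [Submodule.topologicalClosure_coe, Submodule.coe_iSup_of_directed Z hmono.directed_le]
    rw [← SetLike.mem_coe, this, hdense.closure_eq]
    trivial
  have hptwise : ∀ v : H, Tendsto (fun N => (orthogonalProjection (Z N) v : H)) atTop (𝓝 v) :=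
    fun v => Submodule.starProjection_tendsto_self Z hmono v htop
  set K := L₀ᗮ with hK
  set k := Module.finrank ℝ K with hk
  -- the key density statement
  have hsub : (L₀ : Set H) ⊆ closure (⋃ N, ((L₀ ⊓ Z N : Submodule ℝ H) : Set H)) := by
    intro x hx
    rw [Metric.mem_closure_iff]
    intro ε hε
    set δ := ε / 3 with hδdef
    have hδ : 0 < δ := by positivity
    obtain ⟨b⟩ : Nonempty (OrthonormalBasis (Fin k) ℝ K) := ⟨stdOrthonormalBasis ℝ K⟩
    -- choose N approximating x and the basis of K simultaneously
    have h1 : ∀ᶠ N in atTop, ‖(orthogonalProjection (Z N) x : H) - x‖ < δ := by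
      have := (hptwise x).eventually (Metric.ball_mem_nhds x hδ)
      filter_upwards [this] with N hN
      rw [dist_eq_norm] at hN
      exact hN
    have h2 : ∀ᶠ N in atTop, ∀ i : Fin k,
        ‖(orthogonalProjection (Z N) (b i : H) : H) - (b i : H)‖ ≤ 1 / (2 * (k + 1)) := by
      rw [eventually_all]
      intro i
      have hpos : (0:ℝ) < 1 / (2 * ((k:ℝ) + 1)) := by positivity
      have := (hptwise (b i : H)).eventually (Metric.ball_mem_nhds (b i : H) hpos)
      filter_upwards [this] with N hN
      rw [dist_eq_norm] at hN
      exact hN.le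
    obtain ⟨N, hN1, hN2⟩ := (h1.and h2).exists
    -- the perturbed projection operator on K
    set T : H →L[ℝ] H := (Z N).subtypeL.comp (orthogonalProjection (Z N)) with hT
    have hTv : ∀ v : H, T v = (orthogonalProjection (Z N) v : H) := fun v => rfl
    -- the operator `T` moves vectors of `K` by at most half their norm
    have hhalf : ∀ e : K, ‖T (e : H) - (e : H)‖ ≤ (1/2) * ‖(e : H)‖ := by
      intro e
      have hrep : (e : H) = ∑ i, ((inner ℝ (b i) e : ℝ) • (b i : H)) := by
        have := b.sum_repr' e
        calc (e : H) = ((∑ i, ((inner ℝ (b i) e : ℝ) • b i) : K) : H) := by rw [this]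
          _ = ∑ i, ((inner ℝ (b i) e : ℝ) • (b i : H)) := by push_cast; rfl
      set f : H →L[ℝ] H := T - ContinuousLinearMap.id ℝ H with hf
      have hfe : T (e : H) - (e : H) = f (e : H) := rfl
      have hfsum : f (e : H) = ∑ i, f ((inner ℝ (b i) e : ℝ) • (b i : H)) := by
        conv_lhs => rw [hrep]
        rw [map_sum]
      have hterm : ∀ i : Fin k, ‖f ((inner ℝ (b i) e : ℝ) • (b i : H))‖
          ≤ ‖(e : H)‖ * (1 / (2 * (k + 1))) := by
        intro i
        rw [map_smul, norm_smul]
        have hb1 : ‖b i‖ = 1 := b.orthonormal.1 i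
        have hci : |(inner ℝ (b i) e : ℝ)| ≤ ‖(e : H)‖ := by
          calc |(inner ℝ (b i) e : ℝ)| ≤ ‖b i‖ * ‖e‖ := abs_real_inner_le_norm _ _
            _ = ‖(e : H)‖ := by rw [hb1, one_mul]; rfl
        have hfb : ‖f (b i : H)‖ ≤ 1 / (2 * (k + 1)) := by
          have : f (b i : H) = (orthogonalProjection (Z N) (b i : H) : H) - (b i : H) := rfl
          rw [this]; exact hN2 i
        apply mul_le_mul _ hfb (norm_nonneg _) (norm_nonneg _)
        simpa [Real.norm_eq_abs] using hci
      have hbound : ‖f (e : H)‖ ≤ (k : ℝ) * (‖(e : H)‖ * (1 / (2 * (k + 1)))) := by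
        rw [hfsum]
        calc ‖∑ i, f ((inner ℝ (b i) e : ℝ) • (b i : H))‖
            ≤ ∑ _i : Fin k, ‖(e : H)‖ * (1 / (2 * (k + 1))) := norm_sum_le_of_le _ (fun i _ => hterm i)
          _ = (k : ℝ) * (‖(e : H)‖ * (1 / (2 * (k + 1)))) := by
              rw [Finset.sum_const, Finset.card_univ, Fintype.card_fin, nsmul_eq_mul]
      rw [hfe]
      refine le_trans hbound ?_
      have hkey : (k : ℝ) * (1 / (2 * ((k : ℝ) + 1))) ≤ 1 / 2 := by
        rw [mul_one_div, div_le_div_iff₀ (by positivity) (by norm_num : (0:ℝ) < 2)]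
        nlinarith [Nat.cast_nonneg (α := ℝ) k]
      nlinarith [norm_nonneg (e : H), Nat.cast_nonneg (α := ℝ) k,
        mul_le_mul_of_nonneg_right hkey (norm_nonneg (e : H))]
    -- the compressed operator `S` on `K`
    set S : K →ₗ[ℝ] K := ((orthogonalProjection K).comp (T.comp K.subtypeL)).toLinearMap with hS
    have hSe : ∀ e : K, S e = orthogonalProjection K (T (e : H)) := fun e => rfl
    have hSmove : ∀ e : K, ‖S e - e‖ ≤ (1/2) * ‖e‖ := by
      intro e
      have h1' : S e - e = orthogonalProjection K (T (e : H) - (e : H)) := by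
        rw [hSe, map_sub]
        congr 1
        exact (orthogonalProjection_mem_subspace_eq_self e).symm
      calc ‖S e - e‖ = ‖(↑(S e - e) : H)‖ := rfl
        _ = ‖(orthogonalProjection K (T (e : H) - (e : H)) : H)‖ := by rw [h1']
        _ ≤ ‖T (e : H) - (e : H)‖ := proj_coe_norm_le K _
        _ ≤ (1/2) * ‖(e : H)‖ := hhalf e
        _ = (1/2) * ‖e‖ := rfl
    have hnorm_lower : ∀ e : K, (1/2) * ‖e‖ ≤ ‖S e‖ := by
      intro e
      have := norm_sub_norm_le (S e - e) (S e)
      have h2' : ‖S e - e - S e‖ = ‖e‖ := by rw [sub_sub_cancel_left, norm_neg]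
      nlinarith [hSmove e, norm_nonneg (S e), norm_nonneg e, norm_sub_norm_le e (S e),
        norm_sub_rev (S e) e, hSmove e]
    have hinj : Function.Injective S := by
      rw [← LinearMap.ker_eq_bot, LinearMap.ker_eq_bot']
      intro e he
      have := hnorm_lower e
      rw [he, norm_zero] at this
      have : ‖e‖ ≤ 0 := by linarith
      exact norm_le_zero_iff.mp this
    have hsurj : Function.Surjective S :=
      (LinearMap.injective_iff_surjective_of_finrank_eq_finrank rfl).mp hinj
    -- build the approximation
    set z := (orthogonalProjection (Z N) x : H) with hz
    set w : K := orthogonalProjection K z with hw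
    have hPx : orthogonalProjection K x = 0 :=
      Submodule.orthogonalProjectionOnto_apply_of_mem_orthogonal
        (L₀.le_orthogonal_orthogonal hx)
    have hwnorm : ‖w‖ ≤ ‖z - x‖ := by
      have : w = orthogonalProjection K (z - x) := by
        rw [map_sub, hPx, sub_zero, hw]
      calc ‖w‖ = ‖(w : H)‖ := rfl
        _ = ‖(orthogonalProjection K (z - x) : H)‖ := by rw [this]
        _ ≤ ‖z - x‖ := proj_coe_norm_le K _
    obtain ⟨e, he⟩ := hsurj w
    have henorm : ‖e‖ ≤ 2 * ‖w‖ := by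
      have := hnorm_lower e
      rw [he] at this
      linarith
    set y := z - T (e : H) with hy
    have hyZ : y ∈ Z N := by
      apply Submodule.sub_mem
      · exact SetLike.coe_mem _
      · exact SetLike.coe_mem _
    have hyL : y ∈ L₀ := by
      have h0 : orthogonalProjection K y = 0 := by
        rw [hy, map_sub, ← hw, ← hSe, he, sub_self]
      have : y ∈ Kᗮ := Submodule.orthogonalProjectionOnto_eq_zero_iff.mp h0
      rwa [hK, Submodule.orthogonal_orthogonal] at this
    refine ⟨y, ?_, ?_⟩
    · exact Set.mem_iUnion.mpr ⟨N, ⟨hyL, hyZ⟩⟩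
    · rw [dist_eq_norm]
      have hTe : ‖T (e : H)‖ ≤ ‖e‖ := proj_coe_norm_le (Z N) _
      have hxy : x - y = (x - z) + T (e : H) := by rw [hy]; abel
      have : ‖x - y‖ ≤ ‖x - z‖ + ‖T (e : H)‖ := by rw [hxy]; exact norm_add_le _ _
      have hzx : ‖x - z‖ < δ := by rw [norm_sub_rev]; exact hN1
      have hcalc : ‖e‖ < 2 * δ := by
        have : ‖w‖ < δ := lt_of_le_of_lt hwnorm hN1
        linarith
      calc ‖x - y‖ ≤ ‖x - z‖ + ‖T (e : H)‖ := this
        _ < δ + 2 * δ := by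
            apply add_lt_add_of_lt_of_le hzx
            linarith [le_trans hTe hcalc.le]
        _ ≤ ε := by rw [hδdef]; linarith
  have hm2 : Monotone (fun N => (L₀ ⊓ Z N : Submodule ℝ H)) :=
    fun i j hij => inf_le_inf le_rfl (hmono hij)
  -- closure of the union equals `L₀`
  have hclos : (⨆ N, (L₀ ⊓ Z N : Submodule ℝ H)).topologicalClosure = L₀ := by
    apply le_antisymm
    · exact Submodule.topologicalClosure_minimal _ (iSup_le fun N => inf_le_left) hL₀
    · intro v hv
      rw [← SetLike.mem_coe, Submodule.topologicalClosure_coe,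
        Submodule.coe_iSup_of_directed _ hm2.directed_le]
      exact hsub hv
  refine ⟨?_, hsub⟩
  intro z
  have h := Submodule.starProjection_tendsto_closure_iSup (fun N => (L₀ ⊓ Z N : Submodule ℝ H))
    hm2 z
  rw [← proj_congr _ _ hclos z]
  exact h
end

section
/- Let H be a Hilbert space with increasing finite-dimensional subspaces Z_N having dense union, and let L : H → X and Q : H → W be continuous linear surjections onto finite-dimensional Hilbert spaces such that ker L + ker Q = H. Writing L_N = L|Z_N and Q_N = Q|Z_N, then for all sufficiently large N: Q_N(ker L_N) = W and ker L_N + ker Q_N = Z_N. -/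
/-- If `L : H → X` and `Q : H → W` are continuous linear surjections onto finite-dimensional
Hilbert spaces with `ker L + ker Q = H`, and `(Z_N)` are increasing finite-dimensional
subspaces with dense union, then for large `N`: `Q_N(ker L_N) = W` and
`ker L_N + ker Q_N = Z_N` (kernels of the restrictions being `Z_N ∩ ker L`, `Z_N ∩ ker Q`). -/
theorem stmt11 {H X W : Type*} [NormedAddCommGroup H] [InnerProductSpace ℝ H] [CompleteSpace H]
    [NormedAddCommGroup X] [InnerProductSpace ℝ X] [FiniteDimensional ℝ X]
    [NormedAddCommGroup W] [InnerProductSpace ℝ W] [FiniteDimensional ℝ W]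
    (Z : ℕ → Submodule ℝ H) (hmono : Monotone Z) [∀ N, FiniteDimensional ℝ (Z N)]
    (hdense : Dense (⋃ N, (Z N : Set H)))
    (L : H →L[ℝ] X) (Q : H →L[ℝ] W)
    (hL : Function.Surjective L) (hQ : Function.Surjective Q)
    (hsum : LinearMap.ker (L : H →ₗ[ℝ] X) ⊔ LinearMap.ker (Q : H →ₗ[ℝ] W) = ⊤) :
    ∃ N₀, ∀ N ≥ N₀,
      Submodule.map (Q : H →ₗ[ℝ] W) (Z N ⊓ LinearMap.ker (L : H →ₗ[ℝ] X)) = ⊤ ∧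
      (Z N ⊓ LinearMap.ker (L : H →ₗ[ℝ] X)) ⊔ (Z N ⊓ LinearMap.ker (Q : H →ₗ[ℝ] W)) = Z N := by
  set T : H →L[ℝ] X × W := L.prod Q with hTdef
  have hmemsum : ∀ h : H, h ∈ LinearMap.ker (L : H →ₗ[ℝ] X) ⊔ LinearMap.ker (Q : H →ₗ[ℝ] W) := fun h => by
    rw [hsum]; trivial
  -- T is surjective
  have hTsurj : Function.Surjective T := by
    rintro ⟨x, w⟩
    obtain ⟨a, ha⟩ := hL x
    obtain ⟨a', ha'⟩ := hQ w
    obtain ⟨k₁, hk₁, k₂, hk₂, hk⟩ := Submodule.mem_sup.mp (hmemsum a)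
    obtain ⟨k₁', hk₁', k₂', hk₂', hk'⟩ := Submodule.mem_sup.mp (hmemsum a')
    refine ⟨k₂ + k₁', ?_⟩
    have h1 : L k₂ = x := by
      have := congrArg L hk
      rw [map_add, (id (LinearMap.mem_ker.mp hk₁) : L k₁ = 0), zero_add] at this
      rw [this, ha]
    have h2 : Q k₁' = w := by
      have := congrArg Q hk'
      rw [map_add, (id (LinearMap.mem_ker.mp hk₂') : Q k₂' = 0), add_zero] at this
      rw [this, ha']
    have : T (k₂ + k₁') = (L (k₂ + k₁'), Q (k₂ + k₁')) := rfl
    rw [this]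
    rw [map_add, map_add, h1, h2, (id (LinearMap.mem_ker.mp hk₁') : L k₁' = 0),
      (id (LinearMap.mem_ker.mp hk₂) : Q k₂ = 0), add_zero, zero_add]
  -- the family of images
  set f : ℕ → Submodule ℝ (X × W) := fun N => Submodule.map (T : H →ₗ[ℝ] X × W) (Z N) with hfdef
  have hfmono : Monotone f := fun m n hmn => Submodule.map_mono (hmono hmn)
  have hsupf : ⨆ N, f N = ⊤ := by
    rw [eq_top_iff]
    rintro v -
    obtain ⟨h, rfl⟩ := hTsurj v
    have hclosed : IsClosed ((⨆ N, f N : Submodule ℝ (X × W)) : Set (X × W)) :=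
      Submodule.closed_of_finiteDimensional _
    have hmaps : Set.MapsTo T (⋃ N, (Z N : Set H))
        ((⨆ N, f N : Submodule ℝ (X × W)) : Set (X × W)) := by
      rintro z hz
      obtain ⟨s, ⟨N, rfl⟩, hzN⟩ := hz
      exact le_iSup f N ⟨z, hzN, rfl⟩
    have : T h ∈ closure ((⨆ N, f N : Submodule ℝ (X × W)) : Set (X × W)) :=
      map_mem_closure T.continuous (hdense h) hmaps
    rwa [hclosed.closure_eq] at this
  obtain ⟨N₀, hN₀⟩ := monotone_stabilizes_iff_noetherian.mpr
    (inferInstance : IsNoetherian ℝ (X × W)) ⟨f, hfmono⟩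
  have hfN₀ : f N₀ = ⊤ := by
    have : ⨆ N, f N ≤ f N₀ := by
      refine iSup_le fun m => ?_
      calc f m ≤ f (max m N₀) := hfmono (le_max_left _ _)
        _ = f N₀ := (hN₀ (max m N₀) (le_max_right _ _)).symm
    exact le_antisymm le_top (hsupf ▸ this)
  refine ⟨N₀, fun N hN => ?_⟩
  have hfN : f N = ⊤ := le_antisymm le_top (hfN₀ ▸ hfmono hN)
  -- key: for any w, there is z ∈ Z N with L z = 0, Q z = w
  have key : ∀ w : W, ∃ z, z ∈ Z N ∧ L z = 0 ∧ Q z = w := by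
    intro w
    have : ((0 : X), w) ∈ f N := by rw [hfN]; trivial
    obtain ⟨z, hz, hTz⟩ := this
    have h1 : L z = 0 := congrArg Prod.fst hTz
    have h2 : Q z = w := congrArg Prod.snd hTz
    exact ⟨z, hz, h1, h2⟩
  constructor
  · rw [eq_top_iff]
    rintro w -
    obtain ⟨z, hz, h1, h2⟩ := key w
    exact ⟨z, ⟨hz, LinearMap.mem_ker.mpr h1⟩, h2⟩
  · refine le_antisymm (sup_le inf_le_left inf_le_left) ?_
    intro z hz
    obtain ⟨u, hu, hLu, hQu⟩ := key (Q z)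
    refine Submodule.mem_sup.mpr ⟨u, ⟨hu, LinearMap.mem_ker.mpr hLu⟩,
      z - u, ⟨Submodule.sub_mem _ hz hu, LinearMap.mem_ker.mpr ?_⟩, by abel⟩
    rw [map_sub, (id hQu : (Q : H →ₗ[ℝ] W) u = (Q : H →ₗ[ℝ] W) z), sub_self]
end

section
/- Let H, W, X be Hilbert spaces, Q : H → W and L : H → X continuous linear maps. Let L₀ be the restriction of L to the subspace ker Q ⊖ ker L (the orthogonal complement of ker Q ∩ ker L within ker Q), viewed as a map into X. Then L₀ L₀* = L P_{ker Q} L*, where P_{ker Q} is the orthogonal projection of H onto ker Q. -/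
/-- For continuous linear maps `Q : H → W`, `L : H → X` between Hilbert spaces, with
`L₀` the restriction of `L` to `ker Q ⊖ ker L` (the orthogonal complement of
`ker Q ∩ ker L` within `ker Q`), one has `L₀ L₀* = L P_{ker Q} L*`. -/
theorem stmt12 {H W X : Type*}
    [NormedAddCommGroup H] [InnerProductSpace ℝ H] [CompleteSpace H]
    [NormedAddCommGroup W] [InnerProductSpace ℝ W] [CompleteSpace W]
    [NormedAddCommGroup X] [InnerProductSpace ℝ X] [CompleteSpace X]
    (Q : H →L[ℝ] W) (L : H →L[ℝ] X)
    (S : Submodule ℝ H)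
    (hS : S = LinearMap.ker (Q : H →ₗ[ℝ] W) ⊓
      (LinearMap.ker (Q : H →ₗ[ℝ] W) ⊓ LinearMap.ker (L : H →ₗ[ℝ] X))ᗮ)
    [CompleteSpace S] [CompleteSpace (LinearMap.ker (Q : H →ₗ[ℝ] W))] :
    (L.comp S.subtypeL) ∘L (ContinuousLinearMap.adjoint (L.comp S.subtypeL)) =
      L ∘L ((LinearMap.ker (Q : H →ₗ[ℝ] W)).subtypeL ∘L
        Submodule.orthogonalProjectionOnto (LinearMap.ker (Q : H →ₗ[ℝ] W))) ∘L
        ContinuousLinearMap.adjoint L := by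
  set K := LinearMap.ker (Q : H →ₗ[ℝ] W) with hK
  set T : Submodule ℝ H := K ⊓ LinearMap.ker (L : H →ₗ[ℝ] X) with hT
  have hTclosed : IsClosed (T : Set H) :=
    (ContinuousLinearMap.isClosed_ker Q).inter (ContinuousLinearMap.isClosed_ker L)
  haveI : CompleteSpace T := hTclosed.completeSpace_coe
  have hSK : S ≤ K := hS ▸ inf_le_left
  have hST : S ≤ Tᗮ := hS ▸ inf_le_right
  -- key: for any k ∈ K, k - P_S k ∈ ker L
  have key : ∀ h : H, L ((Submodule.orthogonalProjectionOnto K h : H)) =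
      L ((Submodule.orthogonalProjectionOnto S h : H)) := by
    intro h
    set k : H := (Submodule.orthogonalProjectionOnto K h : H) with hk
    have hkK : k ∈ K := (Submodule.orthogonalProjectionOnto K h).2
    have hPS : (Submodule.orthogonalProjectionOnto S k : H) = Submodule.orthogonalProjectionOnto S h := by
      rw [hk]
      exact congrArg Subtype.val (Submodule.orthogonalProjectionOnto_starProjection_of_le hSK h)
    rw [← hPS]
    set d : H := k - Submodule.orthogonalProjectionOnto S k with hd
    have hdK : d ∈ K := K.sub_mem hkK (hSK (Submodule.orthogonalProjectionOnto S k).2)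
    have hdS : d ∈ Sᗮ := Submodule.sub_starProjection_mem_orthogonal (K := S) k
    set e : H := d - Submodule.orthogonalProjectionOnto T d with he
    have heT : e ∈ Tᗮ := Submodule.sub_starProjection_mem_orthogonal (K := T) d
    have heK : e ∈ K := K.sub_mem hdK (((Submodule.orthogonalProjectionOnto T d).2 : _ ∈ T).1)
    have heS : e ∈ S := hS ▸ ⟨heK, heT⟩
    have he0 : e = 0 := by
      have h1 : (inner ℝ d e : ℝ) = 0 := (inner_eq_zero_symm).mp (hdS e heS)
      have h2 : (inner ℝ ((Submodule.orthogonalProjectionOnto T d : H)) e : ℝ) = 0 :=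
        heT _ (Submodule.orthogonalProjectionOnto T d).2
      have : (inner ℝ e e : ℝ) = 0 := by
        rw [he, inner_sub_left, h1, h2, sub_zero]
      exact inner_self_eq_zero.mp this
    have hdT : d ∈ T := by
      have : d = (Submodule.orthogonalProjectionOnto T d : H) := by
        rw [← sub_eq_zero]; exact he0
      rw [this]; exact (Submodule.orthogonalProjectionOnto T d).2
    have hdL : L d = 0 := hdT.2
    have : L k - L ((Submodule.orthogonalProjectionOnto S k : H)) = 0 := by
      rw [← map_sub]; exact hdL
    exact (sub_eq_zero.mp this).symm ▸ rfl
  ext x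
  have hadj : ContinuousLinearMap.adjoint (L.comp S.subtypeL) =
      (Submodule.orthogonalProjectionOnto S) ∘L (ContinuousLinearMap.adjoint L) := by
    rw [ContinuousLinearMap.adjoint_comp, Submodule.adjoint_subtypeL]
  rw [hadj]
  simp only [ContinuousLinearMap.comp_apply, ContinuousLinearMap.coe_comp',
    Function.comp_apply, Submodule.coe_subtypeL', Submodule.coe_subtype]
  exact (key (ContinuousLinearMap.adjoint L x)).symm
end

section
/- Let H be a Hilbert space, Q : H → W a continuous linear surjection onto a finite-dimensional inner-product space, and Z₁ ⊆ Z₂ ⊆ ⋯ finite-dimensional subspaces of H whose union is dense. Let z^{0,N} be the point of Z_N ∩ Q⁻¹(w⁰) closest to 0 (defined for large N) and z⁰ the point of Q⁻¹(w⁰) closest to 0. Then z^{0,N} converges weakly to z⁰; consequently, for any continuous linear map 𝓛 : H → X into a finite-dimensional space X, 𝓛 z^{0,N} → 𝓛 z⁰ as N → ∞. -/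
open Filter Topology RealInnerProductSpace

set_option maxHeartbeats 1000000

/-- If `z^{0,N}` is the closest point to the origin of `Z_N ∩ Q⁻¹(w⁰)` (for large `N`)
and `z⁰` the closest point of `Q⁻¹(w⁰)`, then `z^{0,N} → z⁰` weakly; consequently
`𝓛 z^{0,N} → 𝓛 z⁰` for any continuous linear map `𝓛` into a finite-dimensional space. -/
theorem stmt14 {H W : Type*}
    [NormedAddCommGroup H] [InnerProductSpace ℝ H] [CompleteSpace H]
    [NormedAddCommGroup W] [InnerProductSpace ℝ W] [FiniteDimensional ℝ W]
    (Q : H →L[ℝ] W) (hQ : Function.Surjective Q) (w0 : W)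
    (Z : ℕ → Submodule ℝ H) (hmono : Monotone Z) [∀ N, FiniteDimensional ℝ (Z N)]
    (hdense : Dense (⋃ N, (Z N : Set H)))
    (z0N : ℕ → H)
    (hz0N : ∀ᶠ N in atTop, z0N N ∈ Z N ∧ Q (z0N N) = w0 ∧
      ∀ z ∈ Z N, Q z = w0 → ‖z0N N‖ ≤ ‖z‖)
    (z0 : H) (hz0 : Q z0 = w0 ∧ ∀ z : H, Q z = w0 → ‖z0‖ ≤ ‖z‖) :
    (∀ y : H, Tendsto (fun N => ⟪z0N N, y⟫) atTop (𝓝 ⟪z0, y⟫)) ∧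
    (∀ (X : Type) [NormedAddCommGroup X] [InnerProductSpace ℝ X] [FiniteDimensional ℝ X]
        (𝓛 : H →L[ℝ] X),
      Tendsto (fun N => 𝓛 (z0N N)) atTop (𝓝 (𝓛 z0))) := by
  -- a bounded right inverse of Q
  obtain ⟨Rl, hRl⟩ := (Q : H →ₗ[ℝ] W).exists_rightInverse_of_surjective
    (LinearMap.range_eq_top.2 hQ)
  set R : W →L[ℝ] H := LinearMap.toContinuousLinearMap Rl with hRdef
  have hR : ∀ w, Q (R w) = w := by
    intro w
    have := LinearMap.congr_fun hRl w
    simpa [R] using this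
  -- pointwise convergence of orthogonal projections
  have proj_tendsto : ∀ x : H,
      Tendsto (fun N => ((Submodule.orthogonalProjectionOnto (Z N) x : H))) atTop (𝓝 x) := by
    intro x
    rw [Metric.tendsto_atTop]
    intro ε hε
    obtain ⟨y, hy, hxy⟩ := Metric.mem_closure_iff.1 (hdense x) ε hε
    obtain ⟨M, hyM⟩ := Set.mem_iUnion.1 hy
    refine ⟨M, fun N hN => ?_⟩
    have hyN : y ∈ Z N := hmono hN hyM
    have hle : ‖x - (Submodule.orthogonalProjectionOnto (Z N) x : H)‖ ≤ ‖x - y‖ := by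
      rw [← Submodule.starProjection_apply, Submodule.starProjection_minimal]
      exact ciInf_le ⟨0, fun t => by rintro ⟨u, rfl⟩; positivity⟩ (⟨y, hyN⟩ : Z N)
    have : dist ((Submodule.orthogonalProjectionOnto (Z N) x : H)) x ≤ ‖x - y‖ := by
      rw [dist_comm, dist_eq_norm]; exact hle
    calc dist ((Submodule.orthogonalProjectionOnto (Z N) x : H)) x ≤ ‖x - y‖ := this
      _ = dist x y := (dist_eq_norm x y).symm
      _ < ε := hxy
  -- the "correction" operators
  set C : ℕ → (W →L[ℝ] H) := fun N =>
    (Z N).subtypeL.comp ((Submodule.orthogonalProjectionOnto (Z N)).comp R) with hCdef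
  set B : ℕ → (W →L[ℝ] W) := fun N => Q.comp (C N) with hBdef
  have hCmem : ∀ N w, C N w ∈ Z N := fun N w => ((Submodule.orthogonalProjectionOnto (Z N)) (R w)).2
  have hCnorm : ∀ N w, ‖C N w‖ ≤ ‖R‖ * ‖w‖ := by
    intro N w
    have h1 : ‖((Submodule.orthogonalProjectionOnto (Z N)) (R w) : H)‖ ≤ ‖R w‖ := by
      have := (Submodule.orthogonalProjectionOnto (Z N)).le_opNorm (R w)
      have h2 := Submodule.orthogonalProjectionOnto_norm_le (Z N)
      calc ‖((Submodule.orthogonalProjectionOnto (Z N)) (R w) : H)‖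
          = ‖(Submodule.orthogonalProjectionOnto (Z N)) (R w)‖ := rfl
        _ ≤ ‖Submodule.orthogonalProjectionOnto (Z N)‖ * ‖R w‖ := this
        _ ≤ 1 * ‖R w‖ := by gcongr
        _ = ‖R w‖ := one_mul _
    calc ‖C N w‖ = ‖((Submodule.orthogonalProjectionOnto (Z N)) (R w) : H)‖ := rfl
      _ ≤ ‖R w‖ := h1
      _ ≤ ‖R‖ * ‖w‖ := R.le_opNorm w
  -- B N → 1 in the (finite-dimensional) operator space
  have hB1 : Tendsto B atTop (𝓝 1) := by
    classical
    let b := Module.finBasis ℝ W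
    let e : (Fin (Module.finrank ℝ W) → W) ≃ₗ[ℝ] (W →L[ℝ] W) :=
      (b.constr ℝ).trans LinearMap.toContinuousLinearMap
    have he : Continuous e := LinearMap.continuous_of_finiteDimensional e.toLinearMap
    have heval : ∀ (T : W →L[ℝ] W), e (fun i => T (b i)) = T := by
      intro T
      have : (b.constr ℝ (fun i => T (b i)) : W →ₗ[ℝ] W) = (T : W →ₗ[ℝ] W) :=
        b.ext fun i => by simp
      apply ContinuousLinearMap.coe_injective
      have := congrArg (LinearMap.toContinuousLinearMap) this
      simpa [e] using congrArg (fun (f : W →L[ℝ] W) => (f : W →ₗ[ℝ] W)) this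
    have hcomp : Tendsto (fun N => (fun i => B N (b i))) atTop (𝓝 (fun i => b i)) := by
      rw [tendsto_pi_nhds]
      intro i
      have : Tendsto (fun N => Q ((Submodule.orthogonalProjectionOnto (Z N) (R (b i)) : H)))
          atTop (𝓝 (Q (R (b i)))) :=
        (Q.continuous.tendsto _).comp (proj_tendsto (R (b i)))
      simpa [B, C, hR] using this
    have h1 : Tendsto (fun N => e (fun i => B N (b i))) atTop (𝓝 (e (fun i => b i))) :=
      (he.tendsto _).comp hcomp
    have h2 : e (fun i => b i) = 1 := by
      have := heval (1 : W →L[ℝ] W)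
      simpa using this
    simpa [heval, h2] using h1
  have hBunit : ∀ᶠ N in atTop, IsUnit (B N) :=
    hB1.eventually (Units.nhds (1 : (W →L[ℝ] W)ˣ))
  have hBinv : Tendsto (fun N => Ring.inverse (B N)) atTop (𝓝 1) := by
    have := (NormedRing.inverse_continuousAt (1 : (W →L[ℝ] W)ˣ)).tendsto.comp hB1
    simpa [Function.comp_def] using this
  -- the feasible approximations
  set p : ℕ → H := fun N => (Submodule.orthogonalProjectionOnto (Z N) z0 : H) with hpdef
  set c : ℕ → H := fun N => p N + (C N) ((Ring.inverse (B N)) (w0 - Q (p N))) with hcdef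
  have hp : Tendsto p atTop (𝓝 z0) := proj_tendsto z0
  have hu : Tendsto (fun N => w0 - Q (p N)) atTop (𝓝 0) := by
    have : Tendsto (fun N => w0 - Q (p N)) atTop (𝓝 (w0 - Q z0)) :=
      tendsto_const_nhds.sub ((Q.continuous.tendsto _).comp hp)
    simpa [hz0.1] using this
  have hv : Tendsto (fun N => (Ring.inverse (B N)) (w0 - Q (p N))) atTop (𝓝 0) := by
    have hcont : Continuous (fun q : (W →L[ℝ] W) × W => q.1 q.2) :=
      isBoundedBilinearMap_apply.continuous
    have h := (hcont.tendsto ((1 : W →L[ℝ] W), (0 : W))).comp (hBinv.prodMk_nhds hu)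
    simp only [Function.comp_def] at h
    simpa only [ContinuousLinearMap.one_apply] using h
  have hc : Tendsto c atTop (𝓝 z0) := by
    have h0 : Tendsto (fun N => (C N) ((Ring.inverse (B N)) (w0 - Q (p N)))) atTop (𝓝 0) := by
      apply squeeze_zero_norm (fun N => hCnorm N _)
      have : Tendsto (fun N => ‖R‖ * ‖(Ring.inverse (B N)) (w0 - Q (p N))‖) atTop
          (𝓝 (‖R‖ * ‖(0 : W)‖)) := tendsto_const_nhds.mul hv.norm
      simpa using this
    simpa only [add_zero] using hp.add h0
  -- c N is eventually feasible
  have hcfeas : ∀ᶠ N in atTop, c N ∈ Z N ∧ Q (c N) = w0 := by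
    filter_upwards [hBunit] with N hN
    constructor
    · exact (Z N).add_mem ((Submodule.orthogonalProjectionOnto (Z N) z0).2) (hCmem N _)
    · have hQC : ∀ w, Q ((C N) w) = (B N) w := fun w => rfl
      have : (B N) ((Ring.inverse (B N)) (w0 - Q (p N)))
          = (B N * Ring.inverse (B N)) (w0 - Q (p N)) := rfl
      simp only [c, map_add, hQC, this, Ring.mul_inverse_cancel _ hN]
      simp
  -- orthogonality of z0 to ker Q
  have horth : ∀ u : H, Q u = 0 → ⟪z0, u⟫ = 0 := by
    intro u hu0
    set s := ⟪z0, u⟫ with hs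
    set t : ℝ := -s / (‖u‖ ^ 2 + 1) with ht
    have hfeas : Q (z0 + t • u) = w0 := by
      simp [map_add, map_smul, hu0, hz0.1]
    have hle := hz0.2 _ hfeas
    have hsq : ‖z0‖ ^ 2 ≤ ‖z0 + t • u‖ ^ 2 := pow_le_pow_left₀ (norm_nonneg _) hle 2
    have hexp : ‖z0 + t • u‖ ^ 2 = ‖z0‖ ^ 2 + 2 * (t * s) + t ^ 2 * ‖u‖ ^ 2 := by
      rw [norm_add_sq_real, real_inner_smul_right, norm_smul, mul_pow]
      try simp only [Real.norm_eq_abs, sq_abs]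
      try ring
    have hall : 0 ≤ 2 * (t * s) + t ^ 2 * ‖u‖ ^ 2 := by
      rw [hexp] at hsq; linarith
    have hden : (0:ℝ) < ‖u‖ ^ 2 + 1 := by positivity
    have e : 2 * (t * s) + t ^ 2 * ‖u‖ ^ 2
        = -(s ^ 2 * (‖u‖ ^ 2 + 2)) / (‖u‖ ^ 2 + 1) ^ 2 := by
      rw [ht]; field_simp; ring
    rw [e] at hall
    have h4 : 0 ≤ -(s ^ 2 * (‖u‖ ^ 2 + 2)) := by
      have := mul_le_mul_of_nonneg_right hall (le_of_lt (pow_pos hden 2))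
      rwa [zero_mul, div_mul_cancel₀ _ (by positivity : ((‖u‖ ^ 2 + 1) ^ 2 : ℝ) ≠ 0)] at this
    have hs2 : s ^ 2 = 0 := le_antisymm (by nlinarith [sq_nonneg ‖u‖]) (sq_nonneg s)
    exact (pow_eq_zero_iff two_ne_zero).mp hs2
  -- strong convergence
  have hkey : ∀ᶠ N in atTop, ‖z0N N - z0‖ ^ 2 ≤ ‖c N‖ ^ 2 - ‖z0‖ ^ 2 := by
    filter_upwards [hz0N, hcfeas] with N hN hcN
    obtain ⟨hmem, hQz, hmin⟩ := hN
    have hle : ‖z0N N‖ ≤ ‖c N‖ := hmin _ hcN.1 hcN.2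
    have hker : Q (z0N N - z0) = 0 := by simp [map_sub, hQz, hz0.1]
    have hid : ‖z0N N‖ ^ 2 = ‖z0‖ ^ 2 + ‖z0N N - z0‖ ^ 2 := by
      have h := norm_add_sq_real z0 (z0N N - z0)
      rw [horth _ hker] at h
      have e : z0 + (z0N N - z0) = z0N N := by abel
      rw [e] at h
      linarith
    nlinarith [norm_nonneg (z0N N), norm_nonneg (c N)]
  have hrhs : Tendsto (fun N => ‖c N‖ ^ 2 - ‖z0‖ ^ 2) atTop (𝓝 0) := by
    have : Tendsto (fun N => ‖c N‖ ^ 2 - ‖z0‖ ^ 2) atTop (𝓝 (‖z0‖ ^ 2 - ‖z0‖ ^ 2)) :=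
      ((hc.norm).pow 2).sub tendsto_const_nhds
    simpa using this
  have hsq0 : Tendsto (fun N => ‖z0N N - z0‖ ^ 2) atTop (𝓝 0) :=
    squeeze_zero' (Eventually.of_forall fun N => by positivity) hkey hrhs
  have hnorm0 : Tendsto (fun N => ‖z0N N - z0‖) atTop (𝓝 0) := by
    have := (Real.continuous_sqrt.tendsto 0).comp hsq0
    simpa [Real.sqrt_sq (norm_nonneg _), Function.comp_def, Real.sqrt_zero] using this
  have hstrong : Tendsto z0N atTop (𝓝 z0) :=
    tendsto_iff_norm_sub_tendsto_zero.mpr hnorm0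
  constructor
  · intro y
    exact hstrong.inner tendsto_const_nhds
  · intro X _ _ _ 𝓛
    exact (𝓛.continuous.tendsto z0).comp hstrong
end

section
/- Let H be a Hilbert space with increasing finite-dimensional subspaces Z_N having dense union, L : H → X and Q : H → W continuous linear surjections onto finite-dimensional Hilbert spaces, with L mapping ker Q onto X. Let L₀ be the restriction of L to ker Q ⊖ ker L and L_{0,N} the restriction of L to ker(Q|Z_N) ⊖ ker(L|Z_N). Then L_{0,N} L_{0,N}* → L₀ L₀* as operators on X as N → ∞, and consequently det(L_{0,N} L_{0,N}*) → det(L₀ L₀*). -/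
open Filter Topology ContinuousLinearMap

set_option linter.unusedSectionVars false
set_option maxHeartbeats 1000000
set_option synthInstance.maxHeartbeats 200000

section Auxiliary

variable {H X W : Type*}
  [NormedAddCommGroup H] [InnerProductSpace ℝ H] [CompleteSpace H]
  [NormedAddCommGroup X] [InnerProductSpace ℝ X] [FiniteDimensional ℝ X]
  [NormedAddCommGroup W] [InnerProductSpace ℝ W] [FiniteDimensional ℝ W]

lemma aux_key (L : H →L[ℝ] X) (K' : Submodule ℝ H) [CompleteSpace K']
    (S' : Submodule ℝ H) [CompleteSpace S']
    (hS' : S' = K' ⊓ (K' ⊓ LinearMap.ker (L : H →ₗ[ℝ] X))ᗮ) :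
    (L.comp S'.subtypeL) ∘L ContinuousLinearMap.adjoint (L.comp S'.subtypeL)
      = (L ∘L (K'.subtypeL ∘L (Submodule.orthogonalProjectionOnto K'))) ∘L ContinuousLinearMap.adjoint L := by
  have hK'closed : IsClosed (K' : Set H) :=
    (completeSpace_coe_iff_isComplete.mp ‹_›).isClosed
  set K₀ : Submodule ℝ H := K' ⊓ LinearMap.ker (L : H →ₗ[ℝ] X) with hK₀
  have hK₀closed : IsClosed (K₀ : Set H) := by
    rw [hK₀, Submodule.coe_inf]
    exact hK'closed.inter (ContinuousLinearMap.isClosed_ker L)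
  haveI : CompleteSpace K₀ := hK₀closed.completeSpace_coe
  have key : ∀ v : H, L ((Submodule.orthogonalProjectionOnto S' v : H))
      = L ((Submodule.orthogonalProjectionOnto K' v : H)) := by
    intro v
    have hle : S' ≤ K' := hS' ▸ inf_le_left
    set p : H := (Submodule.orthogonalProjectionOnto K' v : H) with hp
    have hpK : p ∈ K' := (Submodule.orthogonalProjectionOnto K' v).2
    have h1 : (Submodule.orthogonalProjectionOnto S' v : H) = (Submodule.orthogonalProjectionOnto S' p : H) := by
      rw [hp, ← Submodule.starProjection_apply K' v, Submodule.orthogonalProjectionOnto_starProjection_of_le hle]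
    rw [h1]
    set w : H := (Submodule.orthogonalProjectionOnto K₀ p : H) with hw
    have hwK₀ : w ∈ K₀ := (Submodule.orthogonalProjectionOnto K₀ p).2
    have hproj : (Submodule.orthogonalProjectionOnto S' p : H) = p - w := by
      rw [← Submodule.starProjection_apply]
      apply Submodule.eq_starProjection_of_mem_orthogonal
      · rw [hS']
        exact ⟨K'.sub_mem hpK hwK₀.1, Submodule.sub_starProjection_mem_orthogonal (K := K₀) p⟩
      · have h2 : p - (p - w) = w := by abel
        rw [h2]
        have hle2 : S' ≤ K₀ᗮ := hS' ▸ inf_le_right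
        exact Submodule.orthogonal_le hle2 (K₀.le_orthogonal_orthogonal hwK₀)
    rw [hproj, map_sub, show L w = 0 from LinearMap.mem_ker.mp hwK₀.2, sub_zero]
  rw [ContinuousLinearMap.adjoint_comp, Submodule.adjoint_subtypeL]
  ext x
  simpa using key (ContinuousLinearMap.adjoint L x)

end Auxiliary

section Aux2

variable {H X W : Type*}
  [NormedAddCommGroup H] [InnerProductSpace ℝ H] [CompleteSpace H]
  [NormedAddCommGroup W] [InnerProductSpace ℝ W] [FiniteDimensional ℝ W]

lemma aux_rightinv (Z : ℕ → Submodule ℝ H) (hmono : Monotone Z)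
    (hdense : Dense (⋃ N, (Z N : Set H)))
    (Q : H →L[ℝ] W) (hQ : Function.Surjective Q) :
    ∃ N₀, ∃ R : W →L[ℝ] H, (∀ w, R w ∈ Z N₀) ∧ ∀ w, Q (R w) = w := by
  set M : ℕ →o Submodule ℝ W :=
    ⟨fun N => Submodule.map (Q : H →ₗ[ℝ] W) (Z N), fun a b hab => Submodule.map_mono (hmono hab)⟩ with hM
  have hsup : ∀ N₁, (∀ m, N₁ ≤ m → M N₁ = M m) → M N₁ = ⊤ := by
    intro N₁ hstab
    have hDense : Dense (⋃ N, ((Submodule.map (Q : H →ₗ[ℝ] W) (Z N) : Submodule ℝ W) : Set W)) := by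
      have himg : Dense (Q '' (⋃ N, (Z N : Set H))) :=
        hQ.denseRange.dense_image Q.continuous hdense
      rwa [Set.image_iUnion] at himg
    have hsub : (⋃ N, ((Submodule.map (Q : H →ₗ[ℝ] W) (Z N) : Submodule ℝ W) : Set W)) ⊆ (M N₁ : Set W) := by
      intro x hx
      obtain ⟨N, hN⟩ := Set.mem_iUnion.mp hx
      rcases le_total N N₁ with h | h
      · exact (M.monotone h : M N ≤ M N₁) hN
      · exact (hstab N h) ▸ hN
    have hDense2 : Dense (M N₁ : Set W) := hDense.mono hsub
    have hclosed : IsClosed ((M N₁ : Submodule ℝ W) : Set W) :=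
      Submodule.closed_of_finiteDimensional _
    have : ((M N₁ : Submodule ℝ W) : Set W) = Set.univ := by
      rw [← hclosed.closure_eq, hDense2.closure_eq]
    exact Submodule.eq_top_iff'.mpr fun x => by
      show x ∈ (M N₁ : Set W); rw [this]; trivial
  obtain ⟨N₀, hN₀⟩ := monotone_stabilizes_iff_noetherian.mpr
    (inferInstance : IsNoetherian ℝ W) M
  have htop : Submodule.map (Q : H →ₗ[ℝ] W) (Z N₀) = ⊤ := hsup N₀ hN₀
  -- build the right inverse using a basis
  set b := Module.finBasis ℝ W with hb
  have hex : ∀ i, ∃ z, z ∈ Z N₀ ∧ Q z = b i := by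
    intro i
    have : (b i) ∈ Submodule.map (Q : H →ₗ[ℝ] W) (Z N₀) := htop ▸ Submodule.mem_top
    obtain ⟨z, hz, hQz⟩ := this
    exact ⟨z, hz, hQz⟩
  choose z hzmem hQz using hex
  set R₀ : W →ₗ[ℝ] H := b.constr ℝ z with hR₀
  refine ⟨N₀, LinearMap.toContinuousLinearMap R₀, ?_, ?_⟩
  · intro w
    have : R₀ w = ∑ i, b.equivFun w i • z i := b.constr_apply_fintype ℝ z w
    simp only [LinearMap.coe_toContinuousLinearMap']
    rw [this]
    exact Submodule.sum_mem _ fun i _ => Submodule.smul_mem _ _ (hzmem i)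
  · intro w
    have hcomp : (Q : H →ₗ[ℝ] W).comp R₀ = LinearMap.id :=
      b.ext fun i => by simp [hR₀, Module.Basis.constr_basis, hQz i]
    simpa using LinearMap.ext_iff.mp hcomp w


lemma aux_denseK (Z : ℕ → Submodule ℝ H) (hmono : Monotone Z)
    (hdense : Dense (⋃ N, (Z N : Set H)))
    (Q : H →L[ℝ] W) (hQ : Function.Surjective Q) :
    ∀ u ∈ LinearMap.ker (Q : H →ₗ[ℝ] W), ∀ ε > (0:ℝ), ∃ N, ∃ z ∈ Z N ⊓ LinearMap.ker (Q : H →ₗ[ℝ] W), ‖z - u‖ < ε := by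
  obtain ⟨N₀, R, hRmem, hQR⟩ := aux_rightinv Z hmono hdense Q hQ
  intro u hu ε hε
  set C : ℝ := ‖R.comp Q‖ with hC
  have hCpos : (0:ℝ) < 1 + C := by positivity
  set δ : ℝ := ε / (1 + C) with hδ
  have hδpos : 0 < δ := div_pos hε hCpos
  have humem : u ∈ closure (⋃ N, (Z N : Set H)) := hdense u
  obtain ⟨z₀, hz₀mem, hz₀close⟩ := Metric.mem_closure_iff.mp humem δ hδpos
  obtain ⟨N₁, hz₀N₁⟩ := Set.mem_iUnion.mp hz₀mem
  refine ⟨max N₀ N₁, z₀ - R (Q z₀), ⟨?_, ?_⟩, ?_⟩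
  · exact Submodule.sub_mem _ (hmono (le_max_right N₀ N₁) hz₀N₁)
      (hmono (le_max_left N₀ N₁) (hRmem _))
  · simp [LinearMap.mem_ker, hQR]
  · have hrw : z₀ - R (Q z₀) - u = (z₀ - u) - (R.comp Q) (z₀ - u) := by
      have hQu : Q u = 0 := LinearMap.mem_ker.mp hu
      simp [map_sub, hQu]
      abel
    have hnorm : ‖z₀ - u‖ < δ := by
      rw [← dist_eq_norm]
      rw [dist_comm]
      exact hz₀close
    calc ‖z₀ - R (Q z₀) - u‖ = ‖(z₀ - u) - (R.comp Q) (z₀ - u)‖ := by rw [hrw]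
      _ ≤ ‖z₀ - u‖ + ‖(R.comp Q) (z₀ - u)‖ := norm_sub_le _ _
      _ ≤ ‖z₀ - u‖ + C * ‖z₀ - u‖ := by
          gcongr
          exact (R.comp Q).le_opNorm _
      _ = (1 + C) * ‖z₀ - u‖ := by ring
      _ < (1 + C) * δ := by gcongr
      _ = ε := by rw [hδ, mul_div_cancel₀ _ hCpos.ne']

lemma aux_projconv (Z : ℕ → Submodule ℝ H) (hmono : Monotone Z)
    [∀ N, FiniteDimensional ℝ (Z N)]
    (hdense : Dense (⋃ N, (Z N : Set H)))
    (Q : H →L[ℝ] W) (hQ : Function.Surjective Q)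
    [CompleteSpace (LinearMap.ker (Q : H →ₗ[ℝ] W) : Submodule ℝ H)]
    [∀ N, CompleteSpace (Z N ⊓ LinearMap.ker (Q : H →ₗ[ℝ] W) : Submodule ℝ H)] (v : H) :
    Tendsto (fun N => ((Submodule.orthogonalProjectionOnto (Z N ⊓ LinearMap.ker (Q : H →ₗ[ℝ] W)) v : H)))
      atTop (𝓝 ((Submodule.orthogonalProjectionOnto (LinearMap.ker (Q : H →ₗ[ℝ] W)) v : H))) := by
  set u : H := (Submodule.orthogonalProjectionOnto (LinearMap.ker (Q : H →ₗ[ℝ] W)) v : H) with hu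
  have humem : u ∈ LinearMap.ker (Q : H →ₗ[ℝ] W) := (Submodule.orthogonalProjectionOnto (LinearMap.ker (Q : H →ₗ[ℝ] W)) v).2
  have hrw : ∀ N, (Submodule.orthogonalProjectionOnto (Z N ⊓ LinearMap.ker (Q : H →ₗ[ℝ] W)) v : H)
      = (Submodule.orthogonalProjectionOnto (Z N ⊓ LinearMap.ker (Q : H →ₗ[ℝ] W)) u : H) := by
    intro N
    rw [hu, ← Submodule.starProjection_apply (LinearMap.ker (Q : H →ₗ[ℝ] W)) v,
      Submodule.orthogonalProjectionOnto_starProjection_of_le inf_le_right]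
  simp only [hrw]
  rw [Metric.tendsto_atTop]
  intro ε hε
  obtain ⟨N₁, z, hzmem, hzclose⟩ := aux_denseK Z hmono hdense Q hQ u humem ε hε
  refine ⟨N₁, fun N hN => ?_⟩
  have hzN : z ∈ Z N ⊓ LinearMap.ker (Q : H →ₗ[ℝ] W) :=
    inf_le_inf_right _ (hmono hN) hzmem
  have hmin : ‖u - (Submodule.orthogonalProjectionOnto (Z N ⊓ LinearMap.ker (Q : H →ₗ[ℝ] W)) u : H)‖ ≤ ‖u - z‖ := by
    rw [← Submodule.starProjection_apply, Submodule.starProjection_minimal]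
    exact ciInf_le ⟨0, fun x ⟨w, hw⟩ => hw ▸ norm_nonneg _⟩
      (⟨z, hzN⟩ : (Z N ⊓ LinearMap.ker (Q : H →ₗ[ℝ] W) : Submodule ℝ H))
  rw [dist_eq_norm, norm_sub_rev]
  calc ‖u - (Submodule.orthogonalProjectionOnto (Z N ⊓ LinearMap.ker (Q : H →ₗ[ℝ] W)) u : H)‖
      ≤ ‖u - z‖ := hmin
    _ = ‖z - u‖ := norm_sub_rev _ _
    _ < ε := hzclose

end Aux2

section Aux4

lemma aux_opconv {X Y : Type*}
    [NormedAddCommGroup X] [InnerProductSpace ℝ X] [FiniteDimensional ℝ X]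
    [NormedAddCommGroup Y] [NormedSpace ℝ Y]
    (T : ℕ → X →L[ℝ] Y) (T' : X →L[ℝ] Y)
    (h : ∀ x, Tendsto (fun N => T N x) atTop (𝓝 (T' x))) :
    Tendsto T atTop (𝓝 T') := by
  set b := stdOrthonormalBasis ℝ X with hb
  rw [tendsto_iff_norm_sub_tendsto_zero]
  have hbound : ∀ N, ‖T N - T'‖ ≤ ∑ i, ‖T N (b i) - T' (b i)‖ := by
    intro N
    apply ContinuousLinearMap.opNorm_le_bound _
      (Finset.sum_nonneg fun i _ => norm_nonneg _)
    intro x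
    have hx : (T N - T') x = ∑ i, b.repr x i • ((T N - T') (b i)) := by
      conv_lhs => rw [← b.sum_repr x]
      rw [map_sum]
      simp [map_smul]
    rw [hx]
    calc ‖∑ i, b.repr x i • ((T N - T') (b i))‖
        ≤ ∑ i, ‖b.repr x i • ((T N - T') (b i))‖ := norm_sum_le _ _
      _ = ∑ i, |b.repr x i| * ‖(T N - T') (b i)‖ := by
          simp [norm_smul, Real.norm_eq_abs]
      _ ≤ ∑ i, ‖x‖ * ‖(T N - T') (b i)‖ := by
          apply Finset.sum_le_sum
          intro i _
          apply mul_le_mul_of_nonneg_right _ (norm_nonneg _)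
          rw [b.repr_apply_apply]
          calc |(inner ℝ (b i) x : ℝ)| ≤ ‖b i‖ * ‖x‖ := abs_real_inner_le_norm _ _
            _ = ‖x‖ := by rw [b.orthonormal.1 i, one_mul]
      _ = (∑ i, ‖T N (b i) - T' (b i)‖) * ‖x‖ := by
          rw [Finset.sum_mul]
          simp [ContinuousLinearMap.sub_apply, mul_comm]
  have hzero : Tendsto (fun N => ∑ i, ‖T N (b i) - T' (b i)‖) atTop (𝓝 0) := by
    have : Tendsto (fun N => ∑ i, ‖T N (b i) - T' (b i)‖) atTop
        (𝓝 (∑ _i : Fin (Module.finrank ℝ X), (0:ℝ))) := by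
      apply tendsto_finset_sum
      intro i _
      exact tendsto_iff_norm_sub_tendsto_zero.mp (h (b i))
    simpa using this
  exact squeeze_zero (fun N => norm_nonneg _) hbound hzero

end Aux4

/-- With `L₀` the restriction of `L` to `ker Q ⊖ ker L` and `L_{0,N}` the restriction of `L`
to `ker(Q|Z_N) ⊖ ker(L|Z_N)`, the operators `L_{0,N} L_{0,N}*` converge to `L₀ L₀*` on `X`,
and consequently their determinants converge. -/
theorem stmt15 {H X W : Type*}
    [NormedAddCommGroup H] [InnerProductSpace ℝ H] [CompleteSpace H]
    [NormedAddCommGroup X] [InnerProductSpace ℝ X] [FiniteDimensional ℝ X]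
    [NormedAddCommGroup W] [InnerProductSpace ℝ W] [FiniteDimensional ℝ W]
    (Z : ℕ → Submodule ℝ H) (hmono : Monotone Z) [∀ N, FiniteDimensional ℝ (Z N)]
    (hdense : Dense (⋃ N, (Z N : Set H)))
    (L : H →L[ℝ] X) (Q : H →L[ℝ] W)
    (hL : Function.Surjective L) (hQ : Function.Surjective Q)
    (hLkerQ : Submodule.map (L : H →ₗ[ℝ] X) (LinearMap.ker (Q : H →ₗ[ℝ] W)) = ⊤)
    (S : Submodule ℝ H)
    (hS : S = LinearMap.ker (Q : H →ₗ[ℝ] W) ⊓ (LinearMap.ker (Q : H →ₗ[ℝ] W) ⊓ LinearMap.ker (L : H →ₗ[ℝ] X))ᗮ)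
    [CompleteSpace S]
    (SN : ℕ → Submodule ℝ H)
    (hSN : ∀ N, SN N = (Z N ⊓ LinearMap.ker (Q : H →ₗ[ℝ] W)) ⊓
      ((Z N ⊓ LinearMap.ker (Q : H →ₗ[ℝ] W)) ⊓ (Z N ⊓ LinearMap.ker (L : H →ₗ[ℝ] X)))ᗮ)
    [∀ N, CompleteSpace (SN N)] :
    Tendsto
      (fun N => (L.comp (SN N).subtypeL) ∘L
        ContinuousLinearMap.adjoint (L.comp (SN N).subtypeL))
      atTop (𝓝 ((L.comp S.subtypeL) ∘L ContinuousLinearMap.adjoint (L.comp S.subtypeL))) ∧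
    Tendsto
      (fun N => LinearMap.det
        (((L.comp (SN N).subtypeL) ∘L
          ContinuousLinearMap.adjoint (L.comp (SN N).subtypeL) : X →L[ℝ] X) : X →ₗ[ℝ] X))
      atTop
      (𝓝 (LinearMap.det
        (((L.comp S.subtypeL) ∘L
          ContinuousLinearMap.adjoint (L.comp S.subtypeL) : X →L[ℝ] X) : X →ₗ[ℝ] X))) := by
  haveI hKc : CompleteSpace (LinearMap.ker (Q : H →ₗ[ℝ] W) : Submodule ℝ H) :=
    (ContinuousLinearMap.isClosed_ker Q).completeSpace_coe
  haveI hKNf : ∀ N, FiniteDimensional ℝ (Z N ⊓ LinearMap.ker (Q : H →ₗ[ℝ] W) : Submodule ℝ H) := fun N =>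
    Submodule.finiteDimensional_inf_left (Z N) (LinearMap.ker (Q : H →ₗ[ℝ] W))
  haveI hKNc : ∀ N, CompleteSpace (Z N ⊓ LinearMap.ker (Q : H →ₗ[ℝ] W) : Submodule ℝ H) := fun N =>
    FiniteDimensional.complete ℝ _
  -- rewrite SN in the standard form
  have hSNeq : ∀ N, SN N = (Z N ⊓ LinearMap.ker (Q : H →ₗ[ℝ] W)) ⊓
      ((Z N ⊓ LinearMap.ker (Q : H →ₗ[ℝ] W)) ⊓ LinearMap.ker (L : H →ₗ[ℝ] X))ᗮ := by
    intro N
    rw [hSN N]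
    congr 2
    apply le_antisymm
    · exact inf_le_inf_left _ inf_le_right
    · exact le_inf inf_le_left (le_inf (inf_le_left.trans inf_le_left) inf_le_right)
  have hidN : ∀ N, (L.comp (SN N).subtypeL) ∘L
      ContinuousLinearMap.adjoint (L.comp (SN N).subtypeL)
      = (L ∘L ((Z N ⊓ LinearMap.ker (Q : H →ₗ[ℝ] W)).subtypeL ∘L
          Submodule.orthogonalProjectionOnto (Z N ⊓ LinearMap.ker (Q : H →ₗ[ℝ] W)))) ∘L ContinuousLinearMap.adjoint L :=
    fun N => aux_key L (Z N ⊓ LinearMap.ker (Q : H →ₗ[ℝ] W)) (SN N) (hSNeq N)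
  have hidS : (L.comp S.subtypeL) ∘L ContinuousLinearMap.adjoint (L.comp S.subtypeL)
      = (L ∘L ((LinearMap.ker (Q : H →ₗ[ℝ] W) : Submodule ℝ H).subtypeL ∘L
          Submodule.orthogonalProjectionOnto (LinearMap.ker (Q : H →ₗ[ℝ] W)))) ∘L ContinuousLinearMap.adjoint L :=
    aux_key L (LinearMap.ker (Q : H →ₗ[ℝ] W)) S hS
  have h1 : Tendsto
      (fun N => (L ∘L ((Z N ⊓ LinearMap.ker (Q : H →ₗ[ℝ] W)).subtypeL ∘L
          Submodule.orthogonalProjectionOnto (Z N ⊓ LinearMap.ker (Q : H →ₗ[ℝ] W)))) ∘L ContinuousLinearMap.adjoint L)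
      atTop
      (𝓝 ((L ∘L ((LinearMap.ker (Q : H →ₗ[ℝ] W) : Submodule ℝ H).subtypeL ∘L
          Submodule.orthogonalProjectionOnto (LinearMap.ker (Q : H →ₗ[ℝ] W)))) ∘L ContinuousLinearMap.adjoint L)) := by
    apply aux_opconv
    intro x
    have hp := aux_projconv Z hmono hdense Q hQ (ContinuousLinearMap.adjoint L x)
    have hc := (L.continuous.tendsto _).comp hp
    exact hc
  have hconv : Tendsto
      (fun N => (L.comp (SN N).subtypeL) ∘L
        ContinuousLinearMap.adjoint (L.comp (SN N).subtypeL))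
      atTop (𝓝 ((L.comp S.subtypeL) ∘L ContinuousLinearMap.adjoint (L.comp S.subtypeL))) := by
    have hfun : (fun N => (L.comp (SN N).subtypeL) ∘L
        ContinuousLinearMap.adjoint (L.comp (SN N).subtypeL))
        = fun N => (L ∘L ((Z N ⊓ LinearMap.ker (Q : H →ₗ[ℝ] W)).subtypeL ∘L
            Submodule.orthogonalProjectionOnto (Z N ⊓ LinearMap.ker (Q : H →ₗ[ℝ] W)))) ∘L ContinuousLinearMap.adjoint L :=
      funext hidN
    rw [hfun, hidS]
    exact h1
  refine ⟨hconv, ?_⟩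
  exact (ContinuousLinearMap.continuous_det.tendsto _).comp hconv
end
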